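/- The identity Σ_{n≥0} (−1)^n (q;q)_n q^{n+1} = Σ_{n≥1} q^{n(n+1)/2}/(−q;q)_n holds for |q| < 1; both sides are the generating function Σ_{π ∈ D} (−1)^{r(π)} q^{|π|}, where D is the set of nonempty partitions into distinct parts and r(π) = l(π) − ν(π) is the rank. -/

import Mathlib

namespace Stmt12

noncomputable def vv (q : ℂ) (T : Finset ℕ) : ℂ :=
  (-1) ^ (T.sup id - T.card) * q ^ (∑ i ∈ T, i)

abbrev P : Type := {T : Finset ℕ // 0 ∉ T ∧ T.Nonempty}

abbrev AA : Type := Σ n : ℕ, {T : Finset ℕ // T ∈ (Finset.Icc 1 n).powerset}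

lemma AA_ext {n n' : ℕ} {T : {T : Finset ℕ // T ∈ (Finset.Icc 1 n).powerset}}
    {T' : {T : Finset ℕ // T ∈ (Finset.Icc 1 n').powerset}} (h : n = n') (h2 : T.1 = T'.1) :
    (⟨n, T⟩ : AA) = ⟨n', T'⟩ := by
  subst h; exact congrArg _ (Subtype.ext h2)

lemma neg_one_pow_sub (a b : ℕ) (h : b ≤ a) :
    ((-1 : ℂ)) ^ (a - b) = (-1) ^ a * (-1) ^ b := by
  obtain ⟨c, rfl⟩ := Nat.exists_eq_add_of_le h
  rw [Nat.add_sub_cancel_left, pow_add]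
  have hb : ((-1 : ℂ)) ^ (2 * b) = 1 := by
    rw [pow_mul]; norm_num
  linear_combination (-((-1:ℂ)) ^ c) * hb

lemma mem_Icc_of {n : ℕ} {T : Finset ℕ} (hT : T ∈ (Finset.Icc 1 n).powerset) :
    ∀ x ∈ T, 1 ≤ x ∧ x ≤ n := by
  intro x hx
  have := Finset.mem_powerset.1 hT hx
  simpa using Finset.mem_Icc.1 this

lemma not_mem_succ {n : ℕ} {T : Finset ℕ} (hT : T ∈ (Finset.Icc 1 n).powerset) :
    n + 1 ∉ T := fun h => by have := (mem_Icc_of hT _ h).2; omega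

noncomputable def eA : AA ≃ P where
  toFun x := ⟨insert (x.1 + 1) x.2.1, by
      constructor
      · intro h
        rcases Finset.mem_insert.1 h with h | h
        · omega
        · exact absurd (mem_Icc_of x.2.2 _ h).1 (by omega)
      · exact Finset.insert_nonempty _ _⟩
  invFun T := ⟨T.1.max' T.2.2 - 1, ⟨T.1.erase (T.1.max' T.2.2), by
      rw [Finset.mem_powerset]
      intro x hx
      have hxT := Finset.mem_of_mem_erase hx
      have hne := Finset.ne_of_mem_erase hx
      have hle := T.1.le_max' x hxT
      have h1 : 1 ≤ x := Nat.one_le_iff_ne_zero.2 (fun h0 => T.2.1 (h0 ▸ hxT))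
      exact Finset.mem_Icc.2 ⟨h1, by omega⟩⟩⟩
  left_inv x := by
    obtain ⟨n, T, hT⟩ := x
    have hn1 : n + 1 ∉ T := not_mem_succ hT
    have hmem : n + 1 ∈ insert (n + 1) T := Finset.mem_insert_self _ _
    have hmax : (insert (n + 1) T).max' (Finset.insert_nonempty _ _) = n + 1 := by
      apply le_antisymm
      · apply Finset.max'_le
        intro y hy
        rcases Finset.mem_insert.1 hy with h | h
        · omega
        · have := (mem_Icc_of hT _ h).2; omega
      · exact Finset.le_max' _ _ hmem
    refine AA_ext (by rw [hmax]; omega) ?_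
    show (insert (n + 1) T).erase ((insert (n + 1) T).max' _) = T
    rw [hmax, Finset.erase_insert hn1]
  right_inv T := by
    obtain ⟨T, h0, hne⟩ := T
    have hm : T.max' hne ∈ T := T.max'_mem hne
    have h1 : 1 ≤ T.max' hne := Nat.one_le_iff_ne_zero.2 (fun h => h0 (h ▸ hm))
    apply Subtype.ext
    show insert (T.max' hne - 1 + 1) (T.erase (T.max' hne)) = T
    rw [Nat.sub_add_cancel h1, Finset.insert_erase hm]

lemma norm_vv (q : ℂ) (T : Finset ℕ) : ‖vv q T‖ = ‖q‖ ^ (∑ i ∈ T, i) := by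
  simp [vv, norm_mul, norm_pow]

lemma sup_card_insert {q : ℂ} {n : ℕ} {T : Finset ℕ} (hT : T ∈ (Finset.Icc 1 n).powerset) :
    vv q (insert (n + 1) T) = ((-1) ^ n * q ^ (n + 1)) * ((-1) ^ T.card * q ^ (∑ i ∈ T, i)) := by
  have hn1 : n + 1 ∉ T := not_mem_succ hT
  have hsup : (insert (n + 1) T).sup id = n + 1 := by
    rw [Finset.sup_insert]
    have : T.sup id ≤ n := Finset.sup_le (fun x hx => (mem_Icc_of hT _ hx).2)
    simp only [id]
    omega
  have hcard : (insert (n + 1) T).card = T.card + 1 := Finset.card_insert_of_notMem hn1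
  have hcardle : T.card ≤ n := by
    have := Finset.card_le_card (Finset.mem_powerset.1 hT)
    simpa using this
  rw [vv, hsup, hcard, Finset.sum_insert hn1]
  have h1 : n + 1 - (T.card + 1) = n - T.card := by omega
  rw [h1, neg_one_pow_sub _ _ hcardle, pow_add]
  ring


lemma card_le_sup {T : Finset ℕ} (h : 0 ∉ T) : T.card ≤ T.sup id := by
  have hsub : T ⊆ Finset.Icc 1 (T.sup id) := by
    intro x hx
    simp only [Finset.mem_Icc]
    exact ⟨Nat.one_le_iff_ne_zero.2 (fun h0 => h (h0 ▸ hx)), Finset.le_sup (f := id) hx⟩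
  have := Finset.card_le_card hsub
  simpa using this

lemma sup_id_eq_max' {T : Finset ℕ} (h : T.Nonempty) : T.sup id = T.max' h := by
  rw [Finset.max'_eq_sup', Finset.sup'_eq_sup]

lemma prodIcc (n : ℕ) (f : ℕ → ℂ) :
    ∏ i ∈ Finset.Icc 1 n, f i = ∏ i ∈ Finset.range n, f (i + 1) := by
  induction n with
  | zero => simp
  | succ n ih =>
      rw [Finset.prod_Icc_succ_top (by omega), ih, Finset.prod_range_succ]

lemma gauss (m : ℕ) : ∑ i ∈ Finset.range m, (i + 1) = m * (m + 1) / 2 := by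
  induction m with
  | zero => simp
  | succ m ih =>
      rw [Finset.sum_range_succ, ih]
      have h3 : (m+1)*(m+1+1) = m*(m+1) + 2*(m+1) := by ring
      omega

lemma sum_id_eq {T : Finset ℕ} : ∑ i ∈ T, i = T.1.sum := by
  show (T.1.map id).sum = T.1.sum
  rw [Multiset.map_id]

lemma prod_one_sub (q : ℂ) (s : Finset ℕ) :
    ∏ i ∈ s, (1 - q ^ i) = ∑ t ∈ s.powerset, (-1) ^ t.card * q ^ (∑ i ∈ t, i) := by
  have h := Finset.prod_add (fun i => -q ^ i) (fun _ => (1:ℂ)) s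
  have h1 : ∏ i ∈ s, (-q ^ i + 1) = ∏ i ∈ s, (1 - q ^ i) :=
    Finset.prod_congr rfl (fun i _ => by ring)
  rw [h1] at h
  rw [h]
  refine Finset.sum_congr rfl (fun t _ => ?_)
  rw [Finset.prod_const_one, mul_one]
  have : ∏ i ∈ t, (-q ^ i) = (-1)^t.card * q ^ (∑ i ∈ t, i) := by
    rw [← Finset.prod_pow_eq_pow_sum, ← Finset.prod_const (-1 : ℂ), ← Finset.prod_mul_distrib]
    exact Finset.prod_congr rfl (fun i _ => by ring)
  rw [this]

lemma prod_one_add (r : ℝ) (s : Finset ℕ) :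
    ∏ i ∈ s, (1 + r ^ i) = ∑ t ∈ s.powerset, r ^ (∑ i ∈ t, i) := by
  have h := Finset.prod_add (fun i => r ^ i) (fun _ => (1:ℝ)) s
  have h1 : ∏ i ∈ s, (r ^ i + 1) = ∏ i ∈ s, (1 + r ^ i) :=
    Finset.prod_congr rfl (fun i _ => by ring)
  rw [h1] at h
  rw [h]
  exact Finset.sum_congr rfl (fun t _ => by
    rw [Finset.prod_const_one, mul_one, Finset.prod_pow_eq_pow_sum])

lemma prod_one_add_le (r : ℝ) (hr0 : 0 ≤ r) (hr1 : r < 1) (n : ℕ) :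
    ∏ i ∈ Finset.Icc 1 n, (1 + r ^ i) ≤ Real.exp (1 - r)⁻¹ := by
  calc ∏ i ∈ Finset.Icc 1 n, (1 + r ^ i)
      ≤ ∏ i ∈ Finset.Icc 1 n, Real.exp (r ^ i) := by
        refine Finset.prod_le_prod (fun i _ => by positivity) (fun i _ => ?_)
        have := Real.add_one_le_exp (r ^ i)
        linarith
    _ = Real.exp (∑ i ∈ Finset.Icc 1 n, r ^ i) := by rw [Real.exp_sum]
    _ ≤ Real.exp (1 - r)⁻¹ := by
        apply Real.exp_le_exp.2
        have hsum : Summable (fun i : ℕ => r ^ i) := summable_geometric_of_lt_one hr0 hr1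
        calc ∑ i ∈ Finset.Icc 1 n, r ^ i ≤ ∑' i : ℕ, r ^ i :=
              Summable.sum_le_tsum _ (fun i _ => by positivity) hsum
          _ = (1 - r)⁻¹ := tsum_geometric_of_lt_one hr0 hr1

lemma norm_fiber_sum (q : ℂ) (n : ℕ) :
    ∑' (T : {T : Finset ℕ // T ∈ (Finset.Icc 1 n).powerset}), ‖vv q (insert (n + 1) T.1)‖
      = ‖q‖ ^ (n + 1) * ∏ i ∈ Finset.Icc 1 n, (1 + ‖q‖ ^ i) := by
  rw [tsum_fintype, Finset.sum_coe_sort ((Finset.Icc 1 n).powerset)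
    (fun t => ‖vv q (insert (n + 1) t)‖)]
  rw [Finset.sum_congr rfl (fun t ht =>
    show ‖vv q (insert (n + 1) t)‖ = ‖q‖ ^ (n + 1) * ‖q‖ ^ (∑ i ∈ t, i) by
      rw [norm_vv, Finset.sum_insert (not_mem_succ ht), pow_add])]
  rw [← Finset.mul_sum, prod_one_add]

lemma summable_normA {q : ℂ} (hq : ‖q‖ < 1) :
    Summable (fun x : AA => ‖vv q (insert (x.1 + 1) x.2.1)‖) := by
  have hr0 : (0:ℝ) ≤ ‖q‖ := norm_nonneg q
  refine (summable_sigma_of_nonneg (fun _ => norm_nonneg _)).2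
    ⟨fun n => Summable.of_finite, ?_⟩
  have hmaj : Summable (fun n : ℕ => ‖q‖ ^ (n + 1) * Real.exp (1 - ‖q‖)⁻¹) := by
    refine ((summable_geometric_of_lt_one hr0 hq).mul_left
      (‖q‖ * Real.exp (1 - ‖q‖)⁻¹)).congr (fun n => ?_)
    ring
  refine Summable.of_nonneg_of_le (fun n => tsum_nonneg (fun _ => norm_nonneg _))
    (fun n => ?_) hmaj
  rw [norm_fiber_sum q n]
  exact mul_le_mul_of_nonneg_left (prod_one_add_le _ hr0 hq n) (by positivity)

lemma summableP {q : ℂ} (hq : ‖q‖ < 1) : Summable (fun T : P => vv q T.1) :=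
  eA.summable_iff.1 (summable_normA hq).of_norm

lemma fiber_sum (q : ℂ) (n : ℕ) :
    ∑' (T : {T : Finset ℕ // T ∈ (Finset.Icc 1 n).powerset}), vv q (insert (n + 1) T.1)
      = (-1) ^ n * (∏ i ∈ Finset.range n, (1 - q ^ (i + 1))) * q ^ (n + 1) := by
  rw [tsum_fintype, Finset.sum_coe_sort ((Finset.Icc 1 n).powerset)
    (fun t => vv q (insert (n + 1) t))]
  rw [Finset.sum_congr rfl (fun t ht => sup_card_insert ht), ← Finset.mul_sum,
    ← prod_one_sub, prodIcc]
  ring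

lemma tsum_P_eq_L {q : ℂ} (hq : ‖q‖ < 1) :
    ∑' (T : P), vv q T.1
      = ∑' n : ℕ, (-1) ^ n * (∏ i ∈ Finset.range n, (1 - q ^ (i + 1))) * q ^ (n + 1) := by
  rw [← eA.tsum_eq (fun T : P => vv q T.1)]
  show ∑' (x : AA), vv q (insert (x.1 + 1) x.2.1) = _
  rw [Summable.tsum_sigma ((summable_normA hq).of_norm)]
  exact tsum_congr (fun n => fiber_sum q n)


abbrev Dm (m : ℕ) : Type := {T : Finset ℕ // 0 ∉ T ∧ T.card = m}

lemma Dm_nonempty {m : ℕ} (x : Dm (m + 1)) : x.1.Nonempty :=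
  Finset.card_pos.1 (by rw [x.2.2]; omega)

lemma not_mem_image_add {k : ℕ} {T : Finset ℕ} (h0 : 0 ∉ T) :
    k + 1 ∉ T.image (· + (k + 1)) := by
  intro h
  obtain ⟨y, hy, hy2⟩ := Finset.mem_image.1 h
  have : y = 0 := by omega
  exact h0 (this ▸ hy)

def shiftE (m : ℕ) : Dm (m + 1) ≃ ℕ × Dm m where
  toFun x :=
    (x.1.min' (Dm_nonempty x) - 1,
     ⟨(x.1.erase (x.1.min' (Dm_nonempty x))).image (· - x.1.min' (Dm_nonempty x)), by
        constructor
        · intro h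
          obtain ⟨y, hy, hy2⟩ := Finset.mem_image.1 h
          have hyT := Finset.mem_of_mem_erase hy
          have hyne := Finset.ne_of_mem_erase hy
          have := x.1.min'_le y hyT
          omega
        · rw [Finset.card_image_of_injOn (fun a ha b hb hab => by
              have ha' := x.1.min'_le a (Finset.mem_of_mem_erase ha)
              have hb' := x.1.min'_le b (Finset.mem_of_mem_erase hb)
              omega), Finset.card_erase_of_mem (x.1.min'_mem _), x.2.2]
          omega⟩)
  invFun p :=
    ⟨insert (p.1 + 1) (p.2.1.image (· + (p.1 + 1))), by
      constructor
      · intro h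
        rcases Finset.mem_insert.1 h with h | h
        · omega
        · obtain ⟨y, _, hy2⟩ := Finset.mem_image.1 h; omega
      · rw [Finset.card_insert_of_notMem (not_mem_image_add p.2.2.1),
          Finset.card_image_of_injOn (fun a _ b _ hab => by simpa using hab), p.2.2.2]⟩
  left_inv x := by
    obtain ⟨T, h0, hc⟩ := x
    have hne : T.Nonempty := Finset.card_pos.1 (by rw [hc]; omega)
    set s := T.min' hne with hs
    have hsT : s ∈ T := T.min'_mem hne
    have hs1 : 1 ≤ s := Nat.one_le_iff_ne_zero.2 (fun h => h0 (h ▸ hsT))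
    apply Subtype.ext
    show insert (s - 1 + 1) (((T.erase s).image (· - s)).image (· + (s - 1 + 1))) = T
    rw [Nat.sub_add_cancel hs1, Finset.image_image]
    have himg : (T.erase s).image ((· + s) ∘ (· - s)) = T.erase s := by
      rw [show ((· + s) ∘ (· - s)) = fun y => y - s + s from rfl]
      have : ∀ y ∈ T.erase s, y - s + s = y := fun y hy => by
        have := T.min'_le y (Finset.mem_of_mem_erase hy); omega
      calc (T.erase s).image (fun y => y - s + s) = (T.erase s).image id :=
            Finset.image_congr this
        _ = T.erase s := Finset.image_id
    rw [himg, Finset.insert_erase hsT]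
  right_inv p := by
    obtain ⟨k, T'⟩ := p
    obtain ⟨T', h0', hc'⟩ := T'
    have hmin : ∀ hne', (insert (k + 1) (T'.image (· + (k + 1)))).min' hne' = k + 1 := by
      intro hne'
      apply le_antisymm
      · exact Finset.min'_le _ _ (Finset.mem_insert_self _ _)
      · apply Finset.le_min'
        intro y hy
        rcases Finset.mem_insert.1 hy with h | h
        · omega
        · obtain ⟨z, _, hz2⟩ := Finset.mem_image.1 h; omega
    dsimp only
    simp only [Prod.mk.injEq]
    refine ⟨by rw [hmin]; omega, Subtype.ext ?_⟩
    show ((insert (k + 1) (T'.image (· + (k + 1)))).erase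
        ((insert (k + 1) (T'.image (· + (k + 1)))).min' _)).image
        (· - (insert (k + 1) (T'.image (· + (k + 1)))).min' _) = T'
    rw [hmin, Finset.erase_insert (not_mem_image_add h0'), Finset.image_image]
    have heq : ∀ y ∈ T', ((· - (k+1)) ∘ (· + (k+1))) y = y := fun y _ => by simp
    calc T'.image ((· - (k+1)) ∘ (· + (k+1))) = T'.image id := Finset.image_congr heq
      _ = T' := Finset.image_id

lemma vv_shift (q : ℂ) (m k : ℕ) (T' : Dm m) :
    vv q ((shiftE m).symm (k, T')).1
      = ((-q ^ (m + 1)) ^ k * q ^ (m + 1)) * vv q T'.1 := by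
  obtain ⟨T', h0', hc'⟩ := T'
  show vv q (insert (k + 1) (T'.image (· + (k + 1)))) = _
  set S := insert (k + 1) (T'.image (· + (k + 1))) with hS
  have hnotmem : k + 1 ∉ T'.image (· + (k + 1)) := not_mem_image_add h0'
  have hinj : ∀ a ∈ T', ∀ b ∈ T', a + (k+1) = b + (k+1) → a = b :=
    fun a _ b _ hab => by omega
  have hsum : ∑ i ∈ S, i = (m + 1) * (k + 1) + ∑ i ∈ T', i := by
    rw [hS, Finset.sum_insert hnotmem, Finset.sum_image hinj, Finset.sum_add_distrib,
      Finset.sum_const, hc', smul_eq_mul]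
    ring
  have hcard : S.card = m + 1 := by
    rw [hS, Finset.card_insert_of_notMem hnotmem,
      Finset.card_image_of_injOn (fun a _ b _ hab => by simpa using hab), hc']
  have hsup : S.sup id = (k + 1) + T'.sup id := by
    rw [hS, Finset.sup_insert]
    rcases T'.eq_empty_or_nonempty with h | h
    · subst h; simp
    · have himg : (T'.image (· + (k + 1))).sup id = (k + 1) + T'.sup id := by
        apply le_antisymm
        · apply Finset.sup_le
          intro y hy
          obtain ⟨z, hz, rfl⟩ := Finset.mem_image.1 hy
          have := Finset.le_sup (f := id) hz
          simp only [id] at this ⊢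
          omega
        · obtain ⟨z, hz, hzs⟩ := Finset.exists_mem_eq_sup T' h id
          rw [hzs]
          have := Finset.le_sup (f := id) (Finset.mem_image_of_mem (· + (k + 1)) hz)
          simp only [id] at this ⊢
          omega
      rw [himg]
      have : 1 ≤ T'.sup id := by
        obtain ⟨z, hz, hzs⟩ := Finset.exists_mem_eq_sup T' h id
        have : z ≠ 0 := fun h' => h0' (h' ▸ hz)
        simp only [id] at hzs
        omega
      simp only [id]
      omega
  have hms : m ≤ T'.sup id := hc' ▸ card_le_sup h0'
  have hrank : S.sup id - S.card = k + (T'.sup id - T'.card) := by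
    rw [hsup, hcard, hc']; omega
  simp only [vv]
  rw [hrank, hsum, pow_add ((-1:ℂ)) k]
  have h2 : ((-q ^ (m+1)) : ℂ) ^ k = (-1)^k * q^((m+1)*k) := by
    rw [neg_pow, ← pow_mul]
  rw [h2]
  have h3 : (m + 1) * (k + 1) + ∑ i ∈ T', i = (m+1)*k + ((m+1) + ∑ i ∈ T', i) := by ring
  rw [h3, pow_add, pow_add]
  ring

instance : Unique (Dm 0) where
  default := ⟨∅, by simp⟩
  uniq x := Subtype.ext (Finset.card_eq_zero.1 x.2.2)

lemma Dm_facts (q : ℂ) (hq : ‖q‖ < 1) : ∀ m : ℕ,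
    Summable (fun T : Dm m => ‖vv q T.1‖) ∧
    ∑' T : Dm m, vv q T.1 = ∏ i ∈ Finset.range m, (q ^ (i+1) * (1 + q ^ (i+1))⁻¹) := by
  intro m
  induction m with
  | zero =>
      refine ⟨Summable.of_finite, ?_⟩
      rw [tsum_eq_single (default : Dm 0) (fun b hb => absurd (Subsingleton.elim b default) hb)]
      show vv q (∅ : Finset ℕ) = 1
      simp [vv]
  | succ m ih =>
      have hrm : ‖q‖ ^ (m+1) < 1 := pow_lt_one₀ (norm_nonneg q) hq (by omega)
      have hqm : ‖(-q ^ (m+1) : ℂ)‖ < 1 := by rw [norm_neg, norm_pow]; exact hrm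
      set g : ℕ → ℂ := fun k => (-q ^ (m+1)) ^ k * q ^ (m+1) with hg
      have hgs : Summable (fun k => ‖g k‖) := by
        refine ((summable_geometric_of_lt_one (by positivity) hrm).mul_right
          (‖q‖ ^ (m+1))).congr (fun k => ?_)
        simp [hg, norm_mul, norm_pow, ← pow_mul, mul_comm]
      have hsummable : Summable (fun T : Dm (m+1) => ‖vv q T.1‖) := by
        apply ((shiftE m).symm.summable_iff).1
        refine (Summable.mul_norm hgs ih.1).congr (fun p => ?_)
        exact congrArg norm (vv_shift q m p.1 p.2).symm
      refine ⟨hsummable, ?_⟩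
      calc ∑' T : Dm (m+1), vv q T.1
          = ∑' p : ℕ × Dm m, vv q ((shiftE m).symm p).1 :=
            ((shiftE m).symm.tsum_eq (fun T : Dm (m+1) => vv q T.1)).symm
        _ = ∑' p : ℕ × Dm m, g p.1 * vv q (p.2).1 :=
            tsum_congr (fun p => vv_shift q m p.1 p.2)
        _ = (∑' k : ℕ, g k) * (∑' T : Dm m, vv q T.1) :=
            (tsum_mul_tsum_of_summable_norm hgs ih.1).symm
        _ = (q ^ (m+1) * (1 + q ^ (m+1))⁻¹) *
              ∏ i ∈ Finset.range m, (q ^ (i+1) * (1 + q ^ (i+1))⁻¹) := by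
            rw [ih.2, hg]
            rw [tsum_mul_right, tsum_geometric_of_norm_lt_one hqm, sub_neg_eq_add]
            ring
        _ = ∏ i ∈ Finset.range (m+1), (q ^ (i+1) * (1 + q ^ (i+1))⁻¹) := by
            rw [Finset.prod_range_succ]; ring

abbrev BB : Type := Σ m : ℕ, Dm (m + 1)

lemma BB_ext {m m' : ℕ} {T : Dm (m+1)} {T' : Dm (m'+1)} (h : m = m') (h2 : T.1 = T'.1) :
    (⟨m, T⟩ : BB) = ⟨m', T'⟩ := by subst h; exact congrArg _ (Subtype.ext h2)

def eB : BB ≃ P where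
  toFun x := ⟨x.2.1, x.2.2.1, Finset.card_pos.1 (by rw [x.2.2.2]; omega)⟩
  invFun T := ⟨T.1.card - 1, ⟨T.1, T.2.1, by have := Finset.card_pos.2 T.2.2; omega⟩⟩
  left_inv x := by
    obtain ⟨m, T, h0, hc⟩ := x
    exact BB_ext (by simp [hc]) rfl
  right_inv T := Subtype.ext rfl

lemma tsum_P_eq_R (q : ℂ) (hq : ‖q‖ < 1) :
    ∑' T : P, vv q T.1
      = ∑' m : ℕ, q ^ ((m+1)*(m+2)/2) / ∏ i ∈ Finset.range (m+1), (1 + q ^ (i+1)) := by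
  rw [← eB.tsum_eq (fun T : P => vv q T.1)]
  show ∑' x : BB, vv q x.2.1 = _
  have hs0 : Summable ((fun T : P => vv q T.1) ∘ eB) := eB.summable_iff.2 (summableP hq)
  have hs : Summable (fun x : BB => vv q x.2.1) := hs0.congr (fun x => rfl)
  rw [Summable.tsum_sigma hs]
  refine tsum_congr (fun m => ?_)
  show ∑' T : Dm (m+1), vv q T.1 = _
  rw [(Dm_facts q hq (m+1)).2, Finset.prod_mul_distrib,
    Finset.prod_pow_eq_pow_sum (Finset.range (m+1)) (fun i => i+1) q, gauss (m+1),
    Finset.prod_inv_distrib, div_eq_mul_inv]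

abbrev CC : Type := Σ N : ℕ, {p : Nat.Partition N // p.parts.Nodup ∧ p.parts ≠ 0}

lemma CC_ext {N N' : ℕ} {p : {p : Nat.Partition N // p.parts.Nodup ∧ p.parts ≠ 0}}
    {p' : {p : Nat.Partition N' // p.parts.Nodup ∧ p.parts ≠ 0}} (h : N = N')
    (h2 : p.1.parts = p'.1.parts) : (⟨N, p⟩ : CC) = ⟨N', p'⟩ := by
  subst h; exact congrArg _ (Subtype.ext (Nat.Partition.ext h2))

def eC : CC ≃ P where
  toFun x := ⟨⟨x.2.1.parts, x.2.2.1⟩, by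
    constructor
    · intro h
      have := x.2.1.parts_pos (show (0:ℕ) ∈ x.2.1.parts from h)
      omega
    · obtain ⟨a, ha⟩ := Multiset.exists_mem_of_ne_zero x.2.2.2
      exact ⟨a, ha⟩⟩
  invFun T :=
    ⟨∑ i ∈ T.1, i,
     ⟨⟨T.1.1, fun {i} hi => Nat.pos_of_ne_zero (fun h => T.2.1 (h ▸ hi)), sum_id_eq.symm⟩,
      T.1.2, fun h => (Finset.nonempty_iff_ne_empty.1 T.2.2) (Finset.val_eq_zero.1 h)⟩⟩
  left_inv x := by
    obtain ⟨N, p, hnd, hne⟩ := x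
    exact CC_ext (by rw [sum_id_eq]; exact p.parts_sum) rfl
  right_inv T := Subtype.ext rfl

lemma vv_mk (q : ℂ) {m : Multiset ℕ} (h : m.Nodup) :
    vv q (⟨m, h⟩ : Finset ℕ) = (-1) ^ (m.sup - Multiset.card m) * q ^ m.sum := by
  have hsup : (⟨m, h⟩ : Finset ℕ).sup id = m.sup := by
    show (m.map id).sup = m.sup
    rw [Multiset.map_id]
  rw [vv, hsup, sum_id_eq]
  rfl

lemma fiberC (q : ℂ) (N : ℕ) :
    ∑' (p : {p : Nat.Partition N // p.parts.Nodup ∧ p.parts ≠ 0}),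
        vv q (⟨p.1.parts, p.2.1⟩ : Finset ℕ)
      = (∑ p ∈ Finset.univ.filter
            (fun p : Nat.Partition N => p.parts.Nodup ∧ p.parts ≠ 0),
          (-1 : ℂ) ^ (p.parts.sup - Multiset.card p.parts)) * q ^ N := by
  classical
  rw [tsum_fintype]
  calc ∑ b : {p : Nat.Partition N // p.parts.Nodup ∧ p.parts ≠ 0},
        vv q (⟨b.1.parts, b.2.1⟩ : Finset ℕ)
      = ∑ b : {p : Nat.Partition N // p.parts.Nodup ∧ p.parts ≠ 0},
          (-1 : ℂ) ^ (b.1.parts.sup - Multiset.card b.1.parts) * q ^ N :=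
        Finset.sum_congr rfl (fun b _ => by rw [vv_mk q b.2.1, b.1.parts_sum])
    _ = ∑ p ∈ Finset.univ.filter
            (fun p : Nat.Partition N => p.parts.Nodup ∧ p.parts ≠ 0),
          (-1 : ℂ) ^ (p.parts.sup - Multiset.card p.parts) * q ^ N :=
        (Finset.sum_subtype (Finset.univ.filter
            (fun p : Nat.Partition N => p.parts.Nodup ∧ p.parts ≠ 0))
          (fun p => by simp)
          (fun p : Nat.Partition N =>
            (-1 : ℂ) ^ (p.parts.sup - Multiset.card p.parts) * q ^ N)).symm
    _ = (∑ p ∈ Finset.univ.filter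
            (fun p : Nat.Partition N => p.parts.Nodup ∧ p.parts ≠ 0),
          (-1 : ℂ) ^ (p.parts.sup - Multiset.card p.parts)) * q ^ N := by
        rw [Finset.sum_mul]

lemma tsum_P_eq_C (q : ℂ) (hq : ‖q‖ < 1) :
    ∑' T : P, vv q T.1
      = ∑' N : ℕ,
          (∑ p ∈ Finset.univ.filter
              (fun p : Nat.Partition N => p.parts.Nodup ∧ p.parts ≠ 0),
            (-1 : ℂ) ^ (p.parts.sup - Multiset.card p.parts)) * q ^ N := by
  rw [← eC.tsum_eq (fun T : P => vv q T.1)]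
  show ∑' x : CC, vv q (⟨x.2.1.parts, x.2.2.1⟩ : Finset ℕ) = _
  have hs0 : Summable ((fun T : P => vv q T.1) ∘ eC) := eC.summable_iff.2 (summableP hq)
  have hs : Summable (fun x : CC => vv q (⟨x.2.1.parts, x.2.2.1⟩ : Finset ℕ)) :=
    hs0.congr (fun x => rfl)
  rw [Summable.tsum_sigma hs]
  exact tsum_congr (fun N => fiberC q N)



end Stmt12

/-- **Identity (5.1).** For `‖q‖ < 1`,
`Σ_{n ≥ 0} (-1)^n (q;q)_n q^{n+1} = Σ_{n ≥ 1} q^{n(n+1)/2}/(-q;q)_n`, and both sides equal the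
generating function `Σ_{π ∈ D} (-1)^{r(π)} q^{|π|}` over nonempty partitions `π` into distinct
parts, where `r(π) = l(π) - ν(π)` is the rank. -/
theorem stmt12 (q : ℂ) (hq : ‖q‖ < 1) :
    (∑' n : ℕ, (-1 : ℂ) ^ n * (∏ i ∈ Finset.range n, (1 - q ^ (i + 1))) * q ^ (n + 1)
      = ∑' n : ℕ, q ^ ((n + 1) * (n + 2) / 2)
          / ∏ i ∈ Finset.range (n + 1), (1 + q ^ (i + 1)))
    ∧
    (∑' n : ℕ, (-1 : ℂ) ^ n * (∏ i ∈ Finset.range n, (1 - q ^ (i + 1))) * q ^ (n + 1)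
      = ∑' N : ℕ,
          (∑ p ∈ Finset.univ.filter
              (fun p : Nat.Partition N => p.parts.Nodup ∧ p.parts ≠ 0),
            (-1 : ℂ) ^ (p.parts.sup - Multiset.card p.parts)) * q ^ N) := by
  constructor
  · rw [← Stmt12.tsum_P_eq_L hq, Stmt12.tsum_P_eq_R q hq]
  · rw [← Stmt12.tsum_P_eq_L hq, Stmt12.tsum_P_eq_C q hq]
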